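/- Let Δ be a simplicial complex on vertex set {x1,x2,x3,y1,y2,y3} whose faces are all subsets F with {xi,yi} ⊄ F for each i and {y1,y2,y3} ⊄ F. Then the geometric realization of Δ is homeomorphic to a closed 2-dimensional disk. -/

import Mathlib

open Sum

/-- Faces of the Stanley–Reisner complex of `⟨x₁y₁, x₂y₂, x₃y₃, y₁y₂y₃⟩`: subsets of
`{x₁,x₂,x₃,y₁,y₂,y₃}` (encoded as `Fin 3 ⊕ Fin 3`) containing no pair `{xᵢ,yᵢ}` and
not containing `{y₁,y₂,y₃}`. -/
def IsFace (F : Finset (Fin 3 ⊕ Fin 3)) : Prop :=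
  (∀ i : Fin 3, ¬(inl i ∈ F ∧ inr i ∈ F)) ∧
    ¬(({inr 0, inr 1, inr 2} : Finset (Fin 3 ⊕ Fin 3)) ⊆ F)

open scoped Classical in
/-- The geometric realization of the complex: convex combinations of the vertices
whose support is a face. -/
noncomputable def realization : Set ((Fin 3 ⊕ Fin 3) → ℝ) :=
  {w | (∀ v, 0 ≤ w v) ∧ (∑ v, w v = 1) ∧
    IsFace (Finset.univ.filter fun v => w v ≠ 0)}

namespace SRDisk

/-- characterization of membership -/
lemma mem_realization {w : (Fin 3 ⊕ Fin 3) → ℝ} :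
    w ∈ realization ↔ (∀ v, 0 ≤ w v) ∧ (∑ v, w v = 1) ∧
      (∀ i : Fin 3, w (inl i) = 0 ∨ w (inr i) = 0) ∧
      (w (inr 0) = 0 ∨ w (inr 1) = 0 ∨ w (inr 2) = 0) := by
  classical
  unfold realization IsFace
  simp only [Set.mem_setOf_eq, Finset.mem_filter, Finset.mem_univ, true_and, ne_eq,
    Finset.insert_subset_iff, Finset.singleton_subset_iff]
  constructor
  · rintro ⟨h1, h2, h3, h4⟩
    refine ⟨h1, h2, fun i => ?_, ?_⟩
    · have := h3 i; tauto
    · tauto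
  · rintro ⟨h1, h2, h3, h4⟩
    refine ⟨h1, h2, fun i => ?_, ?_⟩
    · have := h3 i; tauto
    · tauto

end SRDisk

namespace SRDisk

noncomputable def fm (w : (Fin 3 ⊕ Fin 3) → ℝ) : EuclideanSpace ℝ (Fin 2) :=
  WithLp.toLp 2 ![w (inr 0) - w (inl 0)/3 - (w (inr 2) - w (inl 2)/3),
    w (inr 1) - w (inl 1)/3 - (w (inr 2) - w (inl 2)/3)]

lemma fm_cont : Continuous fm := by
  have : Continuous fun w : (Fin 3 ⊕ Fin 3) → ℝ =>
      (![w (inr 0) - w (inl 0)/3 - (w (inr 2) - w (inl 2)/3),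
        w (inr 1) - w (inl 1)/3 - (w (inr 2) - w (inl 2)/3)] : Fin 2 → ℝ) := by
    apply continuous_pi
    intro i; fin_cases i <;> simp <;> fun_prop
  exact (PiLp.continuous_toLp 2 (fun _ : Fin 2 => ℝ)).comp this

lemma fm_apply_zero (w : (Fin 3 ⊕ Fin 3) → ℝ) :
    fm w 0 = w (inr 0) - w (inl 0)/3 - (w (inr 2) - w (inl 2)/3) := rfl

lemma fm_apply_one (w : (Fin 3 ⊕ Fin 3) → ℝ) :
    fm w 1 = w (inr 1) - w (inl 1)/3 - (w (inr 2) - w (inl 2)/3) := rfl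

def T : Set (EuclideanSpace ℝ (Fin 2)) :=
  {z | z 0 + z 1 ≤ 1 ∧ z 1 - 2 * z 0 ≤ 1 ∧ z 0 - 2 * z 1 ≤ 1}

lemma sum_expand (w : (Fin 3 ⊕ Fin 3) → ℝ) :
    ∑ v, w v = w (inl 0) + w (inl 1) + w (inl 2) + (w (inr 0) + w (inr 1) + w (inr 2)) := by
  rw [Fintype.sum_sum_type]
  simp [Fin.sum_univ_three]

lemma fm_mem_T {w : (Fin 3 ⊕ Fin 3) → ℝ} (hw : w ∈ realization) : fm w ∈ T := by
  obtain ⟨h0, h1, -, -⟩ := mem_realization.1 hw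
  rw [sum_expand] at h1
  have a0 := h0 (inl 0); have a1 := h0 (inl 1); have a2 := h0 (inl 2)
  have p0 := h0 (inr 0); have p1 := h0 (inr 1); have p2 := h0 (inr 2)
  refine ⟨?_, ?_, ?_⟩ <;> rw [fm_apply_zero, fm_apply_one] <;> linarith

/-- structure of coordinates on a face -/
lemma coord_eq {p a : ℝ} (hp : 0 ≤ p) (ha : 0 ≤ a) (h : a = 0 ∨ p = 0) :
    p = max (p - a/3) 0 ∧ a = 3 * max (-(p - a/3)) 0 := by
  rcases h with rfl | rfl
  · constructor
    · have h1 : p - (0:ℝ)/3 = p := by ring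
      rw [h1, max_eq_left hp]
    · have h1 : -(p - (0:ℝ)/3) = -p := by ring
      rw [h1, max_eq_right (by linarith), mul_zero]
  · constructor
    · have h1 : (0:ℝ) - a/3 = -(a/3) := by ring
      rw [h1, max_eq_right (by linarith)]
    · have h1 : -((0:ℝ) - a/3) = a/3 := by ring
      rw [h1, max_eq_left (by linarith)]
      ring

lemma max_shift_le {x d : ℝ} (hd : 0 ≤ d) : max (x + d) 0 ≤ max x 0 + d :=
  max_le (by linarith [le_max_left x 0]) (by linarith [le_max_right x 0])

lemma max_neg_shift_le {x d : ℝ} (hd : 0 ≤ d) : max (-(x + d)) 0 ≤ max (-x) 0 :=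
  max_le (le_trans (by linarith) (le_max_left (-x) 0)) (le_max_right _ _)

/-- key lemma: no nonzero shift preserves the constraints -/
lemma no_shift {b0 b1 b2 d : ℝ} (hd : 0 < d)
    (hsum : max b0 0 + 3 * max (-b0) 0 + (max b1 0 + 3 * max (-b1) 0)
      + (max b2 0 + 3 * max (-b2) 0) = 1)
    (hsum' : max (b0 + d) 0 + 3 * max (-(b0 + d)) 0 + (max (b1 + d) 0 + 3 * max (-(b1 + d)) 0)
      + (max (b2 + d) 0 + 3 * max (-(b2 + d)) 0) = 1)
    (hj : max (b0 + d) 0 = 0 ∨ max (b1 + d) 0 = 0 ∨ max (b2 + d) 0 = 0) : False := by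
  have k0 := max_shift_le (x := b0) hd.le
  have k1 := max_shift_le (x := b1) hd.le
  have k2 := max_shift_le (x := b2) hd.le
  have n0 := max_neg_shift_le (x := b0) hd.le
  have n1 := max_neg_shift_le (x := b1) hd.le
  have n2 := max_neg_shift_le (x := b2) hd.le
  -- for the special index, the weight drops by at least 3d
  have drop : ∀ b : ℝ, max (b + d) 0 = 0 →
      max (b + d) 0 + 3 * max (-(b + d)) 0 ≤ max b 0 + 3 * max (-b) 0 - 3 * d := by
    intro b hb
    have hble : b + d ≤ 0 := by
      by_contra hpos
      push_neg at hpos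
      have : (0:ℝ) < max (b + d) 0 := lt_of_lt_of_le hpos (le_max_left _ _)
      linarith [this.ne', hb]
    have e1 : max (-(b + d)) 0 = -(b + d) := max_eq_left (by linarith)
    have e2 : max (-b) 0 = -b := max_eq_left (by linarith)
    rw [hb, e1, e2]
    have : max b 0 = 0 := max_eq_right (by linarith)
    rw [this]; linarith
  rcases hj with h | h | h
  · have := drop b0 h; linarith
  · have := drop b1 h; linarith
  · have := drop b2 h; linarith

end SRDisk
namespace SRDisk

lemma fm_injOn : ∀ w ∈ realization, ∀ w' ∈ realization, fm w = fm w' → w = w' := by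
  intro w hw w' hw' heq
  obtain ⟨h0, h1, h2, h3⟩ := mem_realization.1 hw
  obtain ⟨h0', h1', h2', h3'⟩ := mem_realization.1 hw'
  rw [sum_expand] at h1 h1'
  -- coordinate structure
  have c0 := coord_eq (h0 (inr 0)) (h0 (inl 0)) (h2 0)
  have c1 := coord_eq (h0 (inr 1)) (h0 (inl 1)) (h2 1)
  have c2 := coord_eq (h0 (inr 2)) (h0 (inl 2)) (h2 2)
  have c0' := coord_eq (h0' (inr 0)) (h0' (inl 0)) (h2' 0)
  have c1' := coord_eq (h0' (inr 1)) (h0' (inl 1)) (h2' 1)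
  have c2' := coord_eq (h0' (inr 2)) (h0' (inl 2)) (h2' 2)
  set b0 := w (inr 0) - w (inl 0)/3 with hb0
  set b1 := w (inr 1) - w (inl 1)/3 with hb1
  set b2 := w (inr 2) - w (inl 2)/3 with hb2
  set b0' := w' (inr 0) - w' (inl 0)/3 with hb0'
  set b1' := w' (inr 1) - w' (inl 1)/3 with hb1'
  set b2' := w' (inr 2) - w' (inl 2)/3 with hb2'
  have e0 : fm w 0 = fm w' 0 := by rw [heq]
  have e1 : fm w 1 = fm w' 1 := by rw [heq]
  rw [fm_apply_zero, fm_apply_zero] at e0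
  rw [fm_apply_one, fm_apply_one] at e1
  set d := b2' - b2 with hd
  have eb0 : b0' = b0 + d := by rw [hd, hb0, hb0', hb2, hb2']; linarith
  have eb1 : b1' = b1 + d := by rw [hd, hb1, hb1', hb2, hb2']; linarith
  have eb2 : b2' = b2 + d := by rw [hd]; ring
  -- sums in terms of the b's
  have hs : max b0 0 + 3 * max (-b0) 0 + (max b1 0 + 3 * max (-b1) 0)
      + (max b2 0 + 3 * max (-b2) 0) = 1 := by
    rw [← c0.1, ← c0.2, ← c1.1, ← c1.2, ← c2.1, ← c2.2]; linarith
  have hs' : max b0' 0 + 3 * max (-b0') 0 + (max b1' 0 + 3 * max (-b1') 0)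
      + (max b2' 0 + 3 * max (-b2') 0) = 1 := by
    rw [← c0'.1, ← c0'.2, ← c1'.1, ← c1'.2, ← c2'.1, ← c2'.2]; linarith
  have hdz : d = 0 := by
    rcases lt_trichotomy d 0 with hlt | hez | hgt
    · -- apply no_shift with roles swapped: b' + (-d) = b
      exfalso
      have hswap : ∀ x : ℝ, x = x + d + -d := fun x => by ring
      refine no_shift (b0 := b0') (b1 := b1') (b2 := b2') (d := -d) (by linarith) ?_ ?_ ?_
      · rw [eb0, eb1, eb2] at hs'
        calc max b0' 0 + 3 * max (-b0') 0 + (max b1' 0 + 3 * max (-b1') 0)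
            + (max b2' 0 + 3 * max (-b2') 0)
            = max (b0 + d) 0 + 3 * max (-(b0 + d)) 0 + (max (b1 + d) 0 + 3 * max (-(b1 + d)) 0)
            + (max (b2 + d) 0 + 3 * max (-(b2 + d)) 0) := by rw [eb0, eb1, eb2]
          _ = 1 := hs'
      · have r0 : b0' + -d = b0 := by rw [eb0]; ring
        have r1 : b1' + -d = b1 := by rw [eb1]; ring
        have r2 : b2' + -d = b2 := by rw [eb2]; ring
        rw [r0, r1, r2]; exact hs
      · have r0 : b0' + -d = b0 := by rw [eb0]; ring
        have r1 : b1' + -d = b1 := by rw [eb1]; ring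
        have r2 : b2' + -d = b2 := by rw [eb2]; ring
        rw [r0, r1, r2]
        rcases h3 with h | h | h
        · left; rw [← c0.1]; exact h
        · right; left; rw [← c1.1]; exact h
        · right; right; rw [← c2.1]; exact h
    · exact hez
    · exfalso
      refine no_shift (b0 := b0) (b1 := b1) (b2 := b2) (d := d) hgt hs ?_ ?_
      · rw [← eb0, ← eb1, ← eb2]; exact hs'
      · rw [← eb0, ← eb1, ← eb2]
        rcases h3' with h | h | h
        · left; rw [← c0'.1]; exact h
        · right; left; rw [← c1'.1]; exact h
        · right; right; rw [← c2'.1]; exact h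
  have eq0 : b0' = b0 := by rw [eb0, hdz]; ring
  have eq1 : b1' = b1 := by rw [eb1, hdz]; ring
  have eq2 : b2' = b2 := by rw [eb2, hdz]; ring
  funext v
  rcases v with i | i <;> fin_cases i
  · show w (inl 0) = w' (inl 0); rw [c0.2, c0'.2, eq0]
  · show w (inl 1) = w' (inl 1); rw [c1.2, c1'.2, eq1]
  · show w (inl 2) = w' (inl 2); rw [c2.2, c2'.2, eq2]
  · show w (inr 0) = w' (inr 0); rw [c0.1, c0'.1, eq0]
  · show w (inr 1) = w' (inr 1); rw [c1.1, c1'.1, eq1]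
  · show w (inr 2) = w' (inr 2); rw [c2.1, c2'.1, eq2]

end SRDisk
namespace SRDisk

lemma tent (b : ℝ) : max b 0 + 3 * max (-b) 0 = max b (-3 * b) := by
  rcases le_total b 0 with h | h
  · rw [max_eq_right h, max_eq_left (by linarith), max_eq_right (by linarith)]; ring
  · rw [max_eq_left h, max_eq_right (by linarith), max_eq_left (by linarith)]; ring

lemma recon (b : ℝ) : max b 0 - 3 * max (-b) 0 / 3 = b := by
  rcases le_total b 0 with h | h
  · rw [max_eq_right h, max_eq_left (by linarith)]; ring
  · rw [max_eq_left h, max_eq_right (by linarith)]; ring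

lemma fm_surjOn : ∀ z ∈ T, ∃ w ∈ realization, fm w = z := by
  rintro z ⟨t1, t2, t3⟩
  set z0 := z 0 with hz0
  set z1 := z 1 with hz1
  set m := min (min z0 z1) 0 with hm
  have hm0 : m ≤ z0 := le_trans (min_le_left _ _) (min_le_left _ _)
  have hm1 : m ≤ z1 := le_trans (min_le_left _ _) (min_le_right _ _)
  have hm2 : m ≤ 0 := min_le_right _ _
  have hmc : m = z0 ∨ m = z1 ∨ m = 0 := by
    rcases min_choice (min z0 z1) 0 with h | h
    · rcases min_choice z0 z1 with h2 | h2
      · left; rw [hm, h, h2]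
      · right; left; rw [hm, h, h2]
    · right; right; rw [hm, h]
  set G : ℝ → ℝ := fun s =>
    max (z0 + s) (-3 * (z0 + s)) + max (z1 + s) (-3 * (z1 + s)) + max s (-3 * s) with hG
  have hGc : Continuous G := by rw [hG]; fun_prop
  have hGtop : G (-m) ≤ 1 := by
    have e0 : max (z0 + -m) (-3 * (z0 + -m)) = z0 + -m := max_eq_left (by linarith)
    have e1 : max (z1 + -m) (-3 * (z1 + -m)) = z1 + -m := max_eq_left (by linarith)
    have e2 : max (-m) (-3 * -m) = -m := max_eq_left (by linarith)
    rw [hG]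
    simp only [e0, e1, e2]
    rcases hmc with h | h | h <;> rw [h] <;> linarith
  have hGbot : 1 ≤ G (-m - 1) := by
    rw [hG]
    have l0 := le_max_left (z0 + (-m - 1)) (-3 * (z0 + (-m - 1)))
    have l1 := le_max_left (z1 + (-m - 1)) (-3 * (z1 + (-m - 1)))
    have l2 := le_max_left (-m - 1) (-3 * (-m - 1))
    have r0 := le_max_right (z0 + (-m - 1)) (-3 * (z0 + (-m - 1)))
    have r1 := le_max_right (z1 + (-m - 1)) (-3 * (z1 + (-m - 1)))
    have r2 := le_max_right (-m - 1) (-3 * (-m - 1))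
    rcases hmc with h | h | h <;> simp only [] <;> linarith
  obtain ⟨s, hsI, hGs⟩ := intermediate_value_Icc' (by linarith : -m - 1 ≤ -m)
    hGc.continuousOn ⟨hGtop, hGbot⟩
  have hs_le : s ≤ -m := hsI.2
  rw [hG] at hGs
  simp only [] at hGs
  set bf : Fin 3 → ℝ := ![z0 + s, z1 + s, s] with hbf
  have hbf0 : bf 0 = z0 + s := rfl
  have hbf1 : bf 1 = z1 + s := rfl
  have hbf2 : bf 2 = s := rfl
  set w : (Fin 3 ⊕ Fin 3) → ℝ :=
    Sum.elim (fun i => 3 * max (-(bf i)) 0) (fun i => max (bf i) 0) with hwdef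
  have hwl : ∀ i, w (inl i) = 3 * max (-(bf i)) 0 := fun i => rfl
  have hwr : ∀ i, w (inr i) = max (bf i) 0 := fun i => rfl
  refine ⟨w, mem_realization.2 ⟨?_, ?_, ?_, ?_⟩, ?_⟩
  · rintro (i | i)
    · rw [hwl]; positivity
    · rw [hwr]; positivity
  · rw [sum_expand, hwl, hwl, hwl, hwr, hwr, hwr, hbf0, hbf1, hbf2]
    linarith [tent (z0 + s), tent (z1 + s), tent s]
  · intro i
    rcases le_total (bf i) 0 with h | h
    · right; rw [hwr, max_eq_right h]
    · left; rw [hwl, max_eq_right (by linarith), mul_zero]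
  · rcases hmc with h | h | h
    · left; rw [hwr, hbf0, max_eq_right (by linarith)]
    · right; left; rw [hwr, hbf1, max_eq_right (by linarith)]
    · right; right; rw [hwr, hbf2, max_eq_right (by linarith)]
  · ext i
    fin_cases i
    · show fm w 0 = z 0
      rw [fm_apply_zero, hwl, hwl, hwr, hwr, hbf0, hbf2, ← hz0]
      linarith [recon (z0 + s), recon s]
    · show fm w 1 = z 1
      rw [fm_apply_one, hwl, hwl, hwr, hwr, hbf1, hbf2, ← hz1]
      linarith [recon (z1 + s), recon s]

end SRDisk
namespace SRDisk

lemma coord_le_norm (z : EuclideanSpace ℝ (Fin 2)) (i : Fin 2) : |z i| ≤ ‖z‖ := by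
  rw [EuclideanSpace.norm_eq]
  calc |z i| = Real.sqrt (‖z i‖ ^ 2) := by
        rw [Real.sqrt_sq (norm_nonneg _), Real.norm_eq_abs]
    _ ≤ Real.sqrt (∑ j, ‖z j‖ ^ 2) := Real.sqrt_le_sqrt <| by
        refine Finset.single_le_sum (f := fun j => ‖z j‖ ^ 2) (fun j _ => by positivity)
          (Finset.mem_univ i)

lemma norm_le_two {z : EuclideanSpace ℝ (Fin 2)} (h0 : |z 0| ≤ 1) (h1 : |z 1| ≤ 1) :
    ‖z‖ ≤ 2 := by
  rw [EuclideanSpace.norm_eq]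
  have e : ∑ j, ‖z j‖ ^ 2 = ‖z 0‖ ^ 2 + ‖z 1‖ ^ 2 := by simp [Fin.sum_univ_two]
  rw [e, Real.norm_eq_abs, Real.norm_eq_abs]
  calc Real.sqrt (|z 0| ^ 2 + |z 1| ^ 2) ≤ Real.sqrt (2 ^ 2) := by
        apply Real.sqrt_le_sqrt
        nlinarith [abs_nonneg (z 0), abs_nonneg (z 1)]
    _ = 2 := Real.sqrt_sq (by norm_num)

end SRDisk


/-- The geometric realization of the Stanley–Reisner complex of
`⟨x₁y₁, x₂y₂, x₃y₃, y₁y₂y₃⟩` is homeomorphic to a closed 2-dimensional disk. -/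
theorem realization_homeomorphic_disk :
    Nonempty (realization ≃ₜ (Metric.closedBall (0 : EuclideanSpace ℝ (Fin 2)) 1)) := by
  classical
  -- compactness of the realization
  have hreal_eq : realization = stdSimplex ℝ (Fin 3 ⊕ Fin 3) ∩
      ((⋂ i : Fin 3, {w : (Fin 3 ⊕ Fin 3) → ℝ | w (inl i) * w (inr i) = 0}) ∩
        {w : (Fin 3 ⊕ Fin 3) → ℝ | w (inr 0) * (w (inr 1) * w (inr 2)) = 0}) := by
    ext w
    rw [SRDisk.mem_realization]
    simp only [Set.mem_inter_iff, Set.mem_iInter, Set.mem_setOf_eq, mul_eq_zero, stdSimplex]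
    tauto
  have hclosed2 : IsClosed ((⋂ i : Fin 3, {w : (Fin 3 ⊕ Fin 3) → ℝ | w (inl i) * w (inr i) = 0}) ∩
      {w : (Fin 3 ⊕ Fin 3) → ℝ | w (inr 0) * (w (inr 1) * w (inr 2)) = 0}) := by
    exact IsClosed.inter (isClosed_iInter fun i => isClosed_eq
      (by fun_prop) continuous_const) (isClosed_eq (by fun_prop) continuous_const)
  have hcomp : IsCompact realization := by
    rw [hreal_eq]
    exact (isCompact_stdSimplex _ _).inter_right hclosed2
  -- properties of the triangle T
  have cc : ∀ i : Fin 2, Continuous fun z : EuclideanSpace ℝ (Fin 2) => z i := fun i =>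
    (continuous_apply i).comp (PiLp.continuous_ofLp 2 fun _ : Fin 2 => ℝ)
  have hTclosed : IsClosed SRDisk.T := by
    have e : SRDisk.T = {z : EuclideanSpace ℝ (Fin 2) | z 0 + z 1 ≤ 1} ∩
        ({z | z 1 - 2 * z 0 ≤ 1} ∩ {z | z 0 - 2 * z 1 ≤ 1}) := rfl
    rw [e]
    exact (isClosed_le ((cc 0).add (cc 1)) continuous_const).inter
      ((isClosed_le ((cc 1).sub (continuous_const.mul (cc 0))) continuous_const).inter
        (isClosed_le ((cc 0).sub (continuous_const.mul (cc 1))) continuous_const))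
  have hTconvex : Convex ℝ SRDisk.T := by
    rintro x ⟨x1, x2, x3⟩ y ⟨y1, y2, y3⟩ a b ha hb hab
    have e : ∀ i : Fin 2, (a • x + b • y) i = a * x i + b * y i := fun i => rfl
    refine ⟨?_, ?_, ?_⟩ <;> rw [e 0, e 1] <;>
      nlinarith [mul_le_mul_of_nonneg_left x1 ha, mul_le_mul_of_nonneg_left y1 hb,
        mul_le_mul_of_nonneg_left x2 ha, mul_le_mul_of_nonneg_left y2 hb,
        mul_le_mul_of_nonneg_left x3 ha, mul_le_mul_of_nonneg_left y3 hb]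
  have hTint : (interior SRDisk.T).Nonempty := by
    refine ⟨0, mem_interior.2 ⟨Metric.ball 0 (1/4), ?_, Metric.isOpen_ball,
      Metric.mem_ball_self (by norm_num)⟩⟩
    intro z hz
    rw [Metric.mem_ball, dist_zero_right] at hz
    have h0 := abs_lt.1 (lt_of_le_of_lt (SRDisk.coord_le_norm z 0) hz)
    have h1 := abs_lt.1 (lt_of_le_of_lt (SRDisk.coord_le_norm z 1) hz)
    exact ⟨by linarith [h0.1, h0.2, h1.1, h1.2], by linarith [h0.1, h0.2, h1.1, h1.2],
      by linarith [h0.1, h0.2, h1.1, h1.2]⟩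
  have hTbdd : Bornology.IsBounded SRDisk.T := by
    refine (Metric.isBounded_closedBall (x := (0 : EuclideanSpace ℝ (Fin 2))) (r := 2)).subset ?_
    rintro z ⟨u1, u2, u3⟩
    rw [Metric.mem_closedBall, dist_zero_right]
    exact SRDisk.norm_le_two (abs_le.2 ⟨by linarith, by linarith⟩)
      (abs_le.2 ⟨by linarith, by linarith⟩)
  obtain ⟨h, -, hcl, -⟩ :=
    exists_homeomorph_image_interior_closure_frontier_eq_unitBall hTconvex hTint hTbdd
  rw [hTclosed.closure_eq] at hcl
  -- the homeomorphism realization ≃ₜ T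
  have hFbij : Function.Bijective
      (fun x : realization => (⟨SRDisk.fm x, SRDisk.fm_mem_T x.2⟩ : SRDisk.T)) := by
    constructor
    · rintro ⟨w, hw⟩ ⟨w', hw'⟩ hww
      have hww' : SRDisk.fm w = SRDisk.fm w' := congrArg Subtype.val hww
      exact Subtype.ext (SRDisk.fm_injOn w hw w' hw' hww')
    · rintro ⟨z, hz⟩
      obtain ⟨w, hw, hfw⟩ := SRDisk.fm_surjOn z hz
      exact ⟨⟨w, hw⟩, Subtype.ext hfw⟩
  have : CompactSpace realization := isCompact_iff_compactSpace.mp hcomp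
  let e1 : realization ≃ₜ SRDisk.T :=
    Continuous.homeoOfEquivCompactToT2 (f := Equiv.ofBijective _ hFbij)
      (Continuous.subtype_mk (SRDisk.fm_cont.comp continuous_subtype_val) _)
  let e2 := h.image SRDisk.T
  let e3 : (↥(⇑h '' SRDisk.T)) ≃ₜ (Metric.closedBall (0 : EuclideanSpace ℝ (Fin 2)) 1) :=
    Homeomorph.setCongr hcl
  exact ⟨e1.trans (e2.trans e3)⟩
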